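/- Let M be the rotation of ℝ² by the angle 2π/3. Let F : ℝ × ℝ² → ℝ be real-analytic in a neighborhood of (λ₀, 0), satisfy F(λ, Mκ) = F(λ, κ), F(λ₀, 0) = 0, ∂F/∂λ(λ₀, 0) = 0, ∂²F/∂λ²(λ₀, 0) ≠ 0, and ∂²F/∂κ₁²(λ₀, 0) = 0. Then there exist δ > 0 and ε > 0 such that every (λ, κ) with F(λ, κ) = 0, |λ − λ₀| < δ, and 0 < ‖κ‖ < δ satisfies |λ − λ₀| ≤ ‖κ‖^{1+ε}. -/

import Mathlib

open Asymptotics Filter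

set_option maxHeartbeats 1000000


/-- Rotation of the Euclidean plane by the angle `2π/3`. -/
noncomputable def rot : EuclideanSpace ℝ (Fin 2) → EuclideanSpace ℝ (Fin 2) :=
  fun x => (WithLp.equiv 2 (Fin 2 → ℝ)).symm
    ![(-1 / 2) * x 0 - (Real.sqrt 3 / 2) * x 1,
      (Real.sqrt 3 / 2) * x 0 - (1 / 2) * x 1]

/-- First coordinate direction in the Euclidean plane. -/
noncomputable def e₁ : ℝ → EuclideanSpace ℝ (Fin 2) :=
  fun t => (WithLp.equiv 2 (Fin 2 → ℝ)).symm ![t, 0]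

noncomputable def rotL : EuclideanSpace ℝ (Fin 2) →L[ℝ] EuclideanSpace ℝ (Fin 2) :=
  LinearMap.toContinuousLinearMap
  { toFun := rot
    map_add' := by
      intro x y
      ext i
      fin_cases i <;>
        simp [rot, PiLp.add_apply] <;> ring
    map_smul' := by
      intro c x
      ext i
      fin_cases i <;>
        simp [rot, PiLp.smul_apply, smul_eq_mul] <;> ring }

lemma rotL_apply (x : EuclideanSpace ℝ (Fin 2)) : rotL x = rot x := rfl

noncomputable def u1 : EuclideanSpace ℝ (Fin 2) := e₁ 1
noncomputable def u2 : EuclideanSpace ℝ (Fin 2) := (WithLp.equiv 2 (Fin 2 → ℝ)).symm ![0, 1]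

lemma e1_eq (t : ℝ) : e₁ t = t • u1 := by
  ext i
  fin_cases i <;> simp [e₁, u1, PiLp.smul_apply, smul_eq_mul]

lemma kappa_decomp (κ : EuclideanSpace ℝ (Fin 2)) : κ = (κ 0) • u1 + (κ 1) • u2 := by
  ext i
  fin_cases i <;>
    simp [u1, u2, e₁, PiLp.add_apply, PiLp.smul_apply, smul_eq_mul]

lemma rot_u1 : rot u1 = (-(1:ℝ)/2) • u1 + (Real.sqrt 3/2) • u2 := by
  ext i
  fin_cases i <;>
    simp [rot, u1, u2, e₁, PiLp.add_apply, PiLp.smul_apply,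
      smul_eq_mul] <;> ring

lemma rot_u2 : rot u2 = (-(Real.sqrt 3)/2) • u1 + (-(1:ℝ)/2) • u2 := by
  ext i
  fin_cases i <;>
    simp [rot, u1, u2, e₁, PiLp.add_apply, PiLp.smul_apply,
      smul_eq_mul] <;> ring


lemma poly_vanish {α β γ : ℝ}
    (h : (fun t : ℝ => α + β * t + γ * t ^ 2) =O[nhds (0:ℝ)] fun t => |t| ^ 3) :
    α = 0 ∧ β = 0 ∧ γ = 0 := by
  obtain ⟨C, hC⟩ := h.bound
  simp only [Real.norm_eq_abs, abs_pow, abs_abs] at hC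
  have h0 : α = 0 := by
    have := hC.self_of_nhds
    simpa using this
  subst h0
  have hb : ∀ᶠ t in nhdsWithin (0:ℝ) {0}ᶜ, ‖β + γ * t‖ ≤ C * t ^ 2 := by
    filter_upwards [nhdsWithin_le_nhds hC, self_mem_nhdsWithin] with t ht ht0
    have ht0'' : t ≠ 0 := ht0
    have ht0' : (0:ℝ) < |t| := abs_pos.mpr ht0''
    have h1 : |t * (β + γ * t)| ≤ C * |t| ^ 3 := by
      have he : (0:ℝ) + β * t + γ * t ^ 2 = t * (β + γ * t) := by ring
      rw [← he]
      exact ht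
    rw [abs_mul] at h1
    have h3 : C * |t| ^ 3 = |t| * (C * t ^ 2) := by
      rw [← sq_abs]; ring
    rw [h3] at h1
    rw [Real.norm_eq_abs]
    exact le_of_mul_le_mul_left h1 ht0'
  have hβ0 : Tendsto (fun t : ℝ => β + γ * t) (nhdsWithin (0:ℝ) {0}ᶜ) (nhds 0) := by
    apply squeeze_zero_norm' hb
    have h4 : Tendsto (fun t : ℝ => C * t ^ 2) (nhds (0:ℝ)) (nhds (C * 0 ^ 2)) :=
      (continuous_const.mul (continuous_pow 2)).tendsto 0
    simpa using h4.mono_left nhdsWithin_le_nhds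
  have hβ1 : Tendsto (fun t : ℝ => β + γ * t) (nhdsWithin (0:ℝ) {0}ᶜ) (nhds β) := by
    have h4 : Tendsto (fun t : ℝ => β + γ * t) (nhds (0:ℝ)) (nhds (β + γ * 0)) :=
      (continuous_const.add (continuous_const.mul continuous_id)).tendsto 0
    simpa using h4.mono_left nhdsWithin_le_nhds
  have hβ : β = 0 := tendsto_nhds_unique hβ1 hβ0
  subst hβ
  have hg : ∀ᶠ t in nhdsWithin (0:ℝ) {0}ᶜ, ‖(γ : ℝ)‖ ≤ C * |t| := by
    filter_upwards [nhdsWithin_le_nhds hC, self_mem_nhdsWithin] with t ht ht0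
    have ht0'' : t ≠ 0 := ht0
    have ht0' : (0:ℝ) < |t| ^ 2 := by positivity
    have h1 : |t ^ 2 * γ| ≤ C * |t| ^ 3 := by
      have he : (0:ℝ) + 0 * t + γ * t ^ 2 = t ^ 2 * γ := by ring
      rw [← he]; exact ht
    rw [abs_mul, abs_pow] at h1
    have h3 : C * |t| ^ 3 = |t| ^ 2 * (C * |t|) := by ring
    rw [h3] at h1
    rw [Real.norm_eq_abs]
    exact le_of_mul_le_mul_left h1 ht0'
  have hγ0 : Tendsto (fun _ : ℝ => γ) (nhdsWithin (0:ℝ) {0}ᶜ) (nhds 0) := by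
    apply squeeze_zero_norm' hg
    have h4 : Tendsto (fun t : ℝ => C * |t|) (nhds (0:ℝ)) (nhds (C * |0|)) :=
      (continuous_const.mul continuous_abs).tendsto 0
    simpa using h4.mono_left nhdsWithin_le_nhds
  have hγ : γ = 0 := tendsto_nhds_unique tendsto_const_nhds hγ0
  exact ⟨rfl, rfl, hγ⟩

section multilin
variable {V : Type*} [NormedAddCommGroup V] [NormedSpace ℝ V]
  (f : ContinuousMultilinearMap ℝ (fun _ : Fin 2 => V) ℝ)
  (g : ContinuousMultilinearMap ℝ (fun _ : Fin 1 => V) ℝ)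

lemma diag2 (w : V) : (f fun _ => w) = f ![w, w] := by
  congr 1; funext i; fin_cases i <;> rfl

lemma upd0 (x y z : V) : Function.update ![x, z] 0 y = ![y, z] := by
  funext i; fin_cases i <;> simp [Function.update]

lemma upd1 (x y z : V) : Function.update ![x, z] 1 y = ![x, y] := by
  funext i; fin_cases i <;> simp [Function.update]

lemma f2_add_left (x y z : V) : f ![x + y, z] = f ![x, z] + f ![y, z] := by
  rw [← upd0 x (x+y) z, f.map_update_add, upd0, upd0]

lemma f2_add_right (x y z : V) : f ![x, y + z] = f ![x, y] + f ![x, z] := by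
  rw [← upd1 x (y+z) x, f.map_update_add, upd1, upd1]

lemma f2_smul_left (c : ℝ) (x z : V) : f ![c • x, z] = c * f ![x, z] := by
  rw [← upd0 x (c • x) z, f.map_update_smul, upd0, smul_eq_mul]

lemma f2_smul_right (c : ℝ) (x z : V) : f ![x, c • z] = c * f ![x, z] := by
  rw [← upd1 x (c • z) x, f.map_update_smul, upd1, smul_eq_mul]

lemma diag1 (w : V) : (g fun _ => w) = g ![w] := by
  congr 1; funext i; fin_cases i <;> rfl

lemma upd01 (x y : V) : Function.update ![x] 0 y = ![y] := by
  funext i; fin_cases i <;> simp [Function.update]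

lemma f1_add (x y : V) : g ![x + y] = g ![x] + g ![y] := by
  rw [← upd01 x (x+y), g.map_update_add, upd01, upd01]

lemma f1_smul (c : ℝ) (x : V) : g ![c • x] = c * g ![x] := by
  rw [← upd01 x (c • x), g.map_update_smul, upd01, smul_eq_mul]

end multilin

section tail
variable {V : Type*} [NormedAddCommGroup V] [NormedSpace ℝ V]

lemma tail_line {F : V → ℝ} {p : FormalMultilinearSeries ℝ V ℝ} {x₀ : V}
    (hp : HasFPowerSeriesAt F p x₀) (w : V) :
    (fun t : ℝ => F (x₀ + t • w) -
      ((p 0 fun _ => 0) + (p 1 fun _ => w) * t + (p 2 fun _ => w) * t ^ 2))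
      =O[nhds (0:ℝ)] fun t => |t| ^ 3 := by
  have hb := hp.isBigO_sub_partialSum_pow 3
  have htw : Tendsto (fun t : ℝ => t • w) (nhds 0) (nhds 0) := by
    have : Tendsto (fun t : ℝ => t • w) (nhds 0) (nhds ((0:ℝ) • w)) :=
      (continuous_id.smul continuous_const).tendsto 0
    simpa using this
  have hcomp := hb.comp_tendsto htw
  have hnorm : (fun t : ℝ => ‖t • w‖ ^ 3) =O[nhds (0:ℝ)] fun t => |t| ^ 3 := by
    apply IsBigO.of_bound (‖w‖ ^ 3)
    filter_upwards with t
    simp only [norm_pow, norm_norm, norm_smul, Real.norm_eq_abs, abs_abs, abs_pow]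
    rw [abs_of_nonneg (by positivity : (0:ℝ) ≤ |t| * ‖w‖), mul_pow]
    exact le_of_eq (by ring)
  have h1 := hcomp.trans hnorm
  have hsum : ∀ t : ℝ, p.partialSum 3 (t • w) =
      (p 0 fun _ => 0) + (p 1 fun _ => w) * t + (p 2 fun _ => w) * t ^ 2 := by
    intro t
    rw [FormalMultilinearSeries.partialSum]
    rw [Finset.sum_range_succ, Finset.sum_range_succ, Finset.sum_range_one]
    have h0 : (p 0 fun _ => t • w) = p 0 fun _ => 0 := by
      congr 1; exact Subsingleton.elim _ _
    have hk : ∀ k : ℕ, (p k fun _ : Fin k => t • w) = t ^ k * p k fun _ => w := by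
      intro k
      have := (p k).map_smul_univ (fun _ : Fin k => t) (fun _ => w)
      simpa [Finset.prod_const, smul_eq_mul] using this
    rw [h0, hk 1, hk 2]
    ring
  have : (fun t : ℝ => F (x₀ + t • w) - p.partialSum 3 (t • w)) =
      fun t : ℝ => F (x₀ + t • w) -
        ((p 0 fun _ => 0) + (p 1 fun _ => w) * t + (p 2 fun _ => w) * t ^ 2) := by
    funext t; rw [hsum t]
  rw [← this]
  exact h1
end tail

section line
variable {V : Type*} [NormedAddCommGroup V] [NormedSpace ℝ V]

lemma line_derivs {F : V → ℝ} {p : FormalMultilinearSeries ℝ V ℝ} {x₀ : V}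
    (hp : HasFPowerSeriesAt F p x₀) (w : V) :
    deriv (fun t : ℝ => F (x₀ + t • w)) 0 = (p 1 fun _ => w) ∧
    iteratedDeriv 2 (fun t : ℝ => F (x₀ + t • w)) 0 = 2 * (p 2 fun _ => w) := by
  set g : ℝ → ℝ := fun t => F (x₀ + t • w) with hgdef
  have hg : AnalyticAt ℝ g 0 := by
    have hFx : AnalyticAt ℝ F ((fun t : ℝ => x₀ + t • w) 0) := by
      simpa using hp.analyticAt
    have hin : AnalyticAt ℝ (fun t : ℝ => x₀ + t • w) 0 :=
      analyticAt_const.add (((ContinuousLinearMap.id ℝ ℝ).smulRight w).analyticAt 0)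
    have hcomp : AnalyticAt ℝ (F ∘ fun t : ℝ => x₀ + t • w) 0 :=
      AnalyticAt.comp (g := F) (f := fun t : ℝ => x₀ + t • w) (x := 0) hFx hin
    exact hcomp
  obtain ⟨q, hq⟩ := hg
  obtain ⟨r, hqb⟩ := id hq
  have hqt : (fun t : ℝ => g t -
      ((q 0 fun _ => 0) + (q 1 fun _ => 1) * t + (q 2 fun _ => 1) * t ^ 2))
      =O[nhds (0:ℝ)] fun t => |t| ^ 3 := by
    have hb := hq.isBigO_sub_partialSum_pow 3
    have hsum : ∀ t : ℝ, q.partialSum 3 t =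
        (q 0 fun _ => 0) + (q 1 fun _ => 1) * t + (q 2 fun _ => 1) * t ^ 2 := by
      intro t
      rw [FormalMultilinearSeries.partialSum]
      rw [Finset.sum_range_succ, Finset.sum_range_succ, Finset.sum_range_one]
      have h0 : (q 0 fun _ => t) = q 0 fun _ => 0 := by
        congr 1; exact Subsingleton.elim _ _
      have hk : ∀ k : ℕ, (q k fun _ : Fin k => t) = t ^ k * q k fun _ => 1 := by
        intro k
        have := (q k).map_smul_univ (fun _ : Fin k => t) (fun _ => 1)
        simpa [Finset.prod_const, smul_eq_mul] using this
      rw [h0, hk 1, hk 2]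
      ring
    have he : (fun t : ℝ => g (0 + t) - q.partialSum 3 t) =
        fun t : ℝ => g t -
          ((q 0 fun _ => 0) + (q 1 fun _ => 1) * t + (q 2 fun _ => 1) * t ^ 2) := by
      funext t; rw [hsum t, zero_add]
    have := hb
    rw [he] at this
    simpa [Real.norm_eq_abs] using this
  have hpt := tail_line hp w
  have hdiff : (fun t : ℝ =>
      ((p 0 fun _ => 0) - (q 0 fun _ => 0)) +
      ((p 1 fun _ => w) - (q 1 fun _ => 1)) * t +
      ((p 2 fun _ => w) - (q 2 fun _ => 1)) * t ^ 2) =O[nhds (0:ℝ)] fun t => |t| ^ 3 := by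
    have := hqt.sub hpt
    have he : (fun t : ℝ =>
        (g t - ((q 0 fun _ => 0) + (q 1 fun _ => 1) * t + (q 2 fun _ => 1) * t ^ 2)) -
        (g t - ((p 0 fun _ => 0) + (p 1 fun _ => w) * t + (p 2 fun _ => w) * t ^ 2))) =
        fun t : ℝ =>
          ((p 0 fun _ => 0) - (q 0 fun _ => 0)) +
          ((p 1 fun _ => w) - (q 1 fun _ => 1)) * t +
          ((p 2 fun _ => w) - (q 2 fun _ => 1)) * t ^ 2 := by
      funext t; ring
    rwa [he] at this
  obtain ⟨-, h1, h2⟩ := poly_vanish hdiff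
  have hc1 : (q 1 fun _ => 1) = (p 1 fun _ => w) := by linarith [sub_eq_zero.mp h1]
  have hc2 : (q 2 fun _ => 1) = (p 2 fun _ => w) := by linarith [sub_eq_zero.mp h2]
  have hfac : ∀ n : ℕ, iteratedDeriv n g 0 = (n.factorial : ℝ) * q n fun _ => 1 := by
    intro n
    have := hqb.factorial_smul (1:ℝ) n
    rw [iteratedDeriv_eq_iteratedFDeriv]
    rw [← this, nsmul_eq_mul]
  constructor
  · have := hfac 1
    rw [iteratedDeriv_one] at this
    rw [this, hc1]; simp
  · have := hfac 2
    rw [this, hc2]; norm_num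
end line


noncomputable def Rhat : (ℝ × EuclideanSpace ℝ (Fin 2)) →L[ℝ] ℝ × EuclideanSpace ℝ (Fin 2) :=
  (ContinuousLinearMap.id ℝ ℝ).prodMap rotL

lemma Rhat_apply (w : ℝ × EuclideanSpace ℝ (Fin 2)) : Rhat w = (w.1, rot w.2) := rfl

noncomputable def ev : ℝ × EuclideanSpace ℝ (Fin 2) := (1, 0)
noncomputable def kv1 : ℝ × EuclideanSpace ℝ (Fin 2) := (0, u1)
noncomputable def kv2 : ℝ × EuclideanSpace ℝ (Fin 2) := (0, u2)

lemma Rhat_e : Rhat ev = ev := by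
  rw [Rhat_apply, ev, Prod.ext_iff]
  constructor
  · rfl
  · show rot 0 = 0
    rw [← rotL_apply, map_zero]

lemma Rhat_k1 : Rhat kv1 = (0:ℝ) • ev + (-(1:ℝ)/2) • kv1 + (Real.sqrt 3/2) • kv2 := by
  rw [Rhat_apply, kv1, Prod.ext_iff]
  constructor
  · show (0:ℝ) = ((0:ℝ) • ev + (-(1:ℝ)/2) • ((0:ℝ), u1) + (Real.sqrt 3/2) • ((0:ℝ), u2)).1
    simp [ev]
  · show rot u1 = ((0:ℝ) • ev + (-(1:ℝ)/2) • ((0:ℝ), u1) + (Real.sqrt 3/2) • ((0:ℝ), u2)).2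
    rw [rot_u1]
    simp [ev]

lemma Rhat_k2 : Rhat kv2 = (0:ℝ) • ev + (-(Real.sqrt 3)/2) • kv1 + (-(1:ℝ)/2) • kv2 := by
  rw [Rhat_apply, kv2, Prod.ext_iff]
  constructor
  · show (0:ℝ) = ((0:ℝ) • ev + (-(Real.sqrt 3)/2) • ((0:ℝ), u1) + (-(1:ℝ)/2) • ((0:ℝ), u2)).1
    simp [ev]
  · show rot u2 = ((0:ℝ) • ev + (-(Real.sqrt 3)/2) • ((0:ℝ), u1) + (-(1:ℝ)/2) • ((0:ℝ), u2)).2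
    rw [rot_u2]
    simp [ev]

lemma pair_decomp (t : ℝ) (κ : EuclideanSpace ℝ (Fin 2)) :
    ((t, κ) : ℝ × EuclideanSpace ℝ (Fin 2)) = t • ev + (κ 0) • kv1 + (κ 1) • kv2 := by
  rw [Prod.ext_iff]
  constructor
  · simp [ev, kv1, kv2]
  · show κ = (t • ev + (κ 0) • kv1 + (κ 1) • kv2).2
    have : (t • ev + (κ 0) • kv1 + (κ 1) • kv2).2
        = t • (0 : EuclideanSpace ℝ (Fin 2)) + (κ 0) • u1 + (κ 1) • u2 := rfl
    rw [this, smul_zero, zero_add, ← kappa_decomp]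

lemma x0_add_e (lam₀ t : ℝ) :
    ((lam₀, (0 : EuclideanSpace ℝ (Fin 2))) + t • ev) = (lam₀ + t, 0) := by
  rw [Prod.ext_iff]
  constructor
  · simp [ev]
  · show (0 : EuclideanSpace ℝ (Fin 2)) + t • (0:EuclideanSpace ℝ (Fin 2)) = 0
    simp

lemma x0_add_k1 (lam₀ t : ℝ) :
    ((lam₀, (0 : EuclideanSpace ℝ (Fin 2))) + t • kv1) = (lam₀, e₁ t) := by
  rw [Prod.ext_iff]
  constructor
  · simp [kv1]
  · show (0 : EuclideanSpace ℝ (Fin 2)) + t • u1 = e₁ t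
    rw [zero_add, e1_eq]

/-- Degenerate-cone case of the dispersion relation near a doubly degenerate
eigenvalue: when the cone coefficient vanishes, the dispersion relation lies in
the region `|λ − λ₀| ≤ ‖κ‖^{1+ε}`, hence is locally flat. -/
theorem stmt9 (F : ℝ × EuclideanSpace ℝ (Fin 2) → ℝ) (lam₀ : ℝ)
    (hF : AnalyticAt ℝ F (lam₀, (0 : EuclideanSpace ℝ (Fin 2))))
    (hinv : ∀ᶠ p in nhds ((lam₀, (0 : EuclideanSpace ℝ (Fin 2)))),
      F (p.1, rot p.2) = F p)
    (hzero : F (lam₀, 0) = 0)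
    (hderiv : deriv (fun l => F (l, (0 : EuclideanSpace ℝ (Fin 2)))) lam₀ = 0)
    (hlam2 : iteratedDeriv 2 (fun l => F (l, (0 : EuclideanSpace ℝ (Fin 2)))) lam₀ ≠ 0)
    (hkap2 : iteratedDeriv 2 (fun t => F (lam₀, e₁ t)) 0 = 0) :
    ∃ δ > 0, ∃ ε > 0, ∀ (l : ℝ) (κ : EuclideanSpace ℝ (Fin 2)),
      F (l, κ) = 0 → |l - lam₀| < δ → 0 < ‖κ‖ → ‖κ‖ < δ →
      |l - lam₀| ≤ ‖κ‖ ^ ((1 : ℝ) + ε) := by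
  obtain ⟨p, hp⟩ := hF
  have hs3 : Real.sqrt 3 ^ 2 = 3 := Real.sq_sqrt (by norm_num)
  -- the restriction along the λ-axis
  have hfe : (fun t : ℝ => F ((lam₀, (0 : EuclideanSpace ℝ (Fin 2))) + t • ev))
      = fun t => F (lam₀ + t, 0) := by
    funext t; rw [x0_add_e]
  -- derivative of λ-restriction : p 1 at ev vanishes
  have hce : (p 1 fun _ => ev) = 0 := by
    have h1 := (line_derivs hp ev).1
    rw [hfe] at h1
    have h2 : deriv (fun t : ℝ => F (lam₀ + t, (0 : EuclideanSpace ℝ (Fin 2)))) 0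
        = deriv (fun l => F (l, (0 : EuclideanSpace ℝ (Fin 2)))) lam₀ := by
      have := deriv_comp_const_add (f := fun l => F (l, (0 : EuclideanSpace ℝ (Fin 2))))
        (a := lam₀) (x := 0)
      simpa using this
    rw [h2, hderiv] at h1
    exact h1.symm
  -- second derivative of λ-restriction : p 2 at ev is nonzero
  have hAe : (p 2 fun _ => ev) ≠ 0 := by
    have h1 := (line_derivs hp ev).2
    rw [hfe] at h1
    have h2 : iteratedDeriv 2 (fun t : ℝ => F (lam₀ + t, (0 : EuclideanSpace ℝ (Fin 2)))) 0
        = iteratedDeriv 2 (fun l => F (l, (0 : EuclideanSpace ℝ (Fin 2)))) lam₀ := by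
      have h3 := congrFun (iteratedDeriv_comp_const_add 2
        (fun l => F (l, (0 : EuclideanSpace ℝ (Fin 2)))) lam₀) 0
      simpa using h3
    rw [h2] at h1
    intro hcontra
    rw [hcontra] at h1
    simp at h1
    exact hlam2 h1
  -- hkap2 : p 2 at kv1 vanishes
  have hak : (p 2 fun _ => kv1) = 0 := by
    have h1 := (line_derivs hp kv1).2
    have hfk : (fun t : ℝ => F ((lam₀, (0 : EuclideanSpace ℝ (Fin 2))) + t • kv1))
        = fun t => F (lam₀, e₁ t) := by
      funext t; rw [x0_add_k1]
    rw [hfk, hkap2] at h1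
    linarith only [h1]

  -- invariance of first and second order diagonal coefficients
  have hinvc : ∀ w : ℝ × EuclideanSpace ℝ (Fin 2),
      (p 1 fun _ => Rhat w) = (p 1 fun _ => w) ∧
      (p 2 fun _ => Rhat w) = (p 2 fun _ => w) := by
    intro w
    have htend : Filter.Tendsto (fun t : ℝ => (lam₀, (0 : EuclideanSpace ℝ (Fin 2))) + t • w)
        (nhds 0) (nhds (lam₀, (0 : EuclideanSpace ℝ (Fin 2)))) := by
      have hc : Continuous fun t : ℝ => (lam₀, (0 : EuclideanSpace ℝ (Fin 2))) + t • w :=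
        continuous_const.add (continuous_id.smul continuous_const)
      have h0 := hc.tendsto 0
      simpa using h0
    have hev : ∀ᶠ t : ℝ in nhds 0,
        F ((lam₀, (0 : EuclideanSpace ℝ (Fin 2))) + t • Rhat w)
          = F ((lam₀, (0 : EuclideanSpace ℝ (Fin 2))) + t • w) := by
      filter_upwards [htend.eventually hinv] with t ht
      have harg : ((((lam₀, (0 : EuclideanSpace ℝ (Fin 2))) + t • w)).1,
          rot (((lam₀, (0 : EuclideanSpace ℝ (Fin 2))) + t • w)).2)
          = (lam₀, (0 : EuclideanSpace ℝ (Fin 2))) + t • Rhat w := by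
        rw [Prod.ext_iff]
        constructor
        · show lam₀ + t • w.1 = lam₀ + t • (Rhat w).1
          rfl
        · show rot ((0 : EuclideanSpace ℝ (Fin 2)) + t • w.2) = 0 + t • rot w.2
          rw [zero_add, zero_add, ← rotL_apply, ← rotL_apply, map_smul]
      rw [← harg]
      exact ht
    have ht1 := tail_line hp (Rhat w)
    have ht2 := tail_line hp w
    have hdiff : (fun t : ℝ => (0:ℝ) +
        ((p 1 fun _ => Rhat w) - (p 1 fun _ => w)) * t +
        ((p 2 fun _ => Rhat w) - (p 2 fun _ => w)) * t ^ 2) =O[nhds (0:ℝ)]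
        fun t => |t| ^ 3 := by
      have h3 := ht2.sub ht1
      apply IsBigO.congr' h3 ?_ (Filter.EventuallyEq.refl _ _)
      filter_upwards [hev] with t ht
      rw [ht]
      ring
    obtain ⟨-, h1, h2⟩ := poly_vanish hdiff
    exact ⟨sub_eq_zero.mp h1, sub_eq_zero.mp h2⟩
  -- rewrite the basic coefficients as bilinear atoms
  rw [diag2] at hak hAe
  rw [diag1] at hce
  -- linear invariance equations
  have EqL1 := (hinvc kv1).1
  rw [Rhat_k1] at EqL1
  simp only [diag1, f1_add, f1_smul] at EqL1
  have EqL2 := (hinvc kv2).1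
  rw [Rhat_k2] at EqL2
  simp only [diag1, f1_add, f1_smul] at EqL2
  have hl2 : p 1 ![kv2] = 0 := by
    linear_combination (Real.sqrt 3/6) * EqL1 - (1/2 : ℝ) * EqL2 - (p 1 ![kv2]/12) * hs3
  have hl1 : p 1 ![kv1] = 0 := by
    linear_combination (-(2:ℝ)/3) * EqL1 + (Real.sqrt 3/3) * hl2
  -- quadratic invariance equations
  have Eq1 := (hinvc kv1).2
  rw [Rhat_k1] at Eq1
  simp only [diag2, f2_add_left, f2_add_right, f2_smul_left, f2_smul_right] at Eq1
  have Eq3 := (hinvc (kv1 + kv2)).2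
  rw [map_add, Rhat_k1, Rhat_k2] at Eq3
  simp only [diag2, f2_add_left, f2_add_right, f2_smul_left, f2_smul_right] at Eq3
  have Eq4 := (hinvc (ev + kv1)).2
  rw [map_add, Rhat_e, Rhat_k1] at Eq4
  simp only [diag2, f2_add_left, f2_add_right, f2_smul_left, f2_smul_right] at Eq4
  have Eq5 := (hinvc (ev + kv2)).2
  rw [map_add, Rhat_e, Rhat_k2] at Eq5
  simp only [diag2, f2_add_left, f2_add_right, f2_smul_left, f2_smul_right] at Eq5
  have hI : Real.sqrt 3 * (p 2 ![kv1,kv2] + p 2 ![kv2,kv1])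
      = 3 * p 2 ![kv2,kv2] - 3 * p 2 ![kv1,kv1] := by
    linear_combination (-4 : ℝ) * Eq1 + (p 2 ![kv2,kv2]) * hs3
  have hII : Real.sqrt 3 * (p 2 ![kv1,kv1] - p 2 ![kv2,kv2])
      = 3 * (p 2 ![kv1,kv2] + p 2 ![kv2,kv1]) := by
    linear_combination (2:ℝ) * Eq3 +
      ((-(p 2 ![kv1,kv1]) + p 2 ![kv1,kv2] + p 2 ![kv2,kv1] - p 2 ![kv2,kv2])/2) * hs3
  have had : p 2 ![kv1,kv1] = p 2 ![kv2,kv2] := by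
    linear_combination (Real.sqrt 3/12) * hII + (1/4 : ℝ) * hI
      + ((-(p 2 ![kv1,kv1]) + p 2 ![kv2,kv2])/12) * hs3
  have hσ : p 2 ![kv1,kv2] + p 2 ![kv2,kv1] = 0 := by
    linear_combination (-(1:ℝ)/3) * hII + (Real.sqrt 3/3) * had
  have hd : p 2 ![kv2,kv2] = 0 := by
    linear_combination hak - had
  have hIII : Real.sqrt 3 * (p 2 ![ev,kv2] + p 2 ![kv2,ev])
      = 3 * (p 2 ![ev,kv1] + p 2 ![kv1,ev]) := by
    linear_combination (2:ℝ)*Eq4 + (3/2 : ℝ)*hak + (Real.sqrt 3/2)*hσ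
      + (-(Real.sqrt 3 ^ 2)/2)*hd
  have hIV : Real.sqrt 3 * (p 2 ![ev,kv1] + p 2 ![kv1,ev])
      = -3 * (p 2 ![ev,kv2] + p 2 ![kv2,ev]) := by
    linear_combination (-(2:ℝ))*Eq5 + ((Real.sqrt 3 ^ 2)/2)*hak + (Real.sqrt 3/2)*hσ
      + (-(3:ℝ)/2)*hd
  have hM2 : p 2 ![ev,kv2] + p 2 ![kv2,ev] = 0 := by
    linear_combination (Real.sqrt 3/12)*hIII + (1/4 : ℝ)*hIV
      + ((-(p 2 ![ev,kv2]) - p 2 ![kv2,ev])/12)*hs3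
  have hM1 : p 2 ![ev,kv1] + p 2 ![kv1,ev] = 0 := by
    linear_combination (-(1:ℝ)/3)*hIII + (Real.sqrt 3/3)*hM2
  -- final forms of the coefficients
  have hc2form : ∀ (t : ℝ) (κ : EuclideanSpace ℝ (Fin 2)),
      (p 2 fun _ => ((t, κ) : ℝ × EuclideanSpace ℝ (Fin 2))) = (p 2 ![ev,ev]) * t^2 := by
    intro t κ
    rw [pair_decomp t κ]
    simp only [diag2, f2_add_left, f2_add_right, f2_smul_left, f2_smul_right]
    linear_combination (t*κ 0)*hM1 + (t*κ 1)*hM2 + (κ 0^2)*hak + (κ 0*κ 1)*hσ + (κ 1^2)*hd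
  have hc1form : ∀ (t : ℝ) (κ : EuclideanSpace ℝ (Fin 2)),
      (p 1 fun _ => ((t, κ) : ℝ × EuclideanSpace ℝ (Fin 2))) = 0 := by
    intro t κ
    rw [pair_decomp t κ]
    simp only [diag1, f1_add, f1_smul]
    linear_combination t*hce + (κ 0)*hl1 + (κ 1)*hl2
  -- global quadratic approximation
  have hb := hp.isBigO_sub_partialSum_pow 3
  obtain ⟨C, hC⟩ := hb.bound
  have hps : ∀ y : ℝ × EuclideanSpace ℝ (Fin 2),
      p.partialSum 3 y = (p 2 ![ev,ev]) * y.1^2 := by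
    intro y
    rw [FormalMultilinearSeries.partialSum]
    rw [Finset.sum_range_succ, Finset.sum_range_succ, Finset.sum_range_one]
    have h0 : (p 0 fun _ => y) = 0 := by
      rw [hp.coeff_zero]
      exact hzero
    have h1 : (p 1 fun _ => y) = 0 := by
      have h2 := hc1form y.1 y.2
      rwa [Prod.mk.eta] at h2
    have h2 : (p 2 fun _ => y) = (p 2 ![ev,ev]) * y.1^2 := by
      have h3 := hc2form y.1 y.2
      rwa [Prod.mk.eta] at h3
    rw [h0, h1, h2]
    ring
  rw [Metric.eventually_nhds_iff] at hC
  obtain ⟨r, hr0, hCb⟩ := hC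
  set A := p 2 ![ev, ev] with hAdef
  set C' := max C 1 with hC'def
  have hC'0 : (0:ℝ) < C' := lt_of_lt_of_le one_pos (le_max_right _ _)
  have hApos : 0 < |A| := abs_pos.mpr hAe
  set δ : ℝ := min (min r 1) (min (|A|/(2*C')) ((|A|/(2*C'))^2)) with hδdef
  have hδ0 : 0 < δ := by positivity
  refine ⟨δ, hδ0, 1/4, by norm_num, ?_⟩
  intro l κ hFzero hlδ hκ0 hκδ
  set t := l - lam₀ with htdef
  set n := ‖κ‖ with hndef
  have hy : ((lam₀, (0:EuclideanSpace ℝ (Fin 2))) + ((t,κ) : ℝ × EuclideanSpace ℝ (Fin 2)))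
      = (l, κ) := by
    rw [Prod.ext_iff]
    constructor
    · show lam₀ + t = l
      rw [htdef]; ring
    · show (0:EuclideanSpace ℝ (Fin 2)) + κ = κ
      rw [zero_add]
  have hynorm : ‖((t,κ) : ℝ × EuclideanSpace ℝ (Fin 2))‖ = max |t| n := by
    rw [Prod.norm_def, Real.norm_eq_abs]
  have hmax0 : (0:ℝ) ≤ max |t| n := le_trans (abs_nonneg t) (le_max_left _ _)
  have hmaxδ : max |t| n < δ := max_lt hlδ hκδ
  have hbound : |A| * t^2 ≤ C' * (max |t| n)^3 := by
    have hdist : dist ((t,κ) : ℝ × EuclideanSpace ℝ (Fin 2)) 0 < r := by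
      rw [dist_zero_right, hynorm]
      calc max |t| n < δ := hmaxδ
        _ ≤ min r 1 := min_le_left _ _
        _ ≤ r := min_le_left _ _
    have h1 := hCb hdist
    rw [hy, hps, hFzero, hynorm] at h1
    have h2 : ‖(0:ℝ) - A * ((t,κ) : ℝ × EuclideanSpace ℝ (Fin 2)).1^2‖ = |A| * t^2 := by
      rw [zero_sub, norm_neg, Real.norm_eq_abs, abs_mul]
      congr 1
      rw [abs_pow, sq_abs]
    rw [h2] at h1
    have h3 : C * ‖(max |t| n)^3‖ ≤ C' * (max |t| n)^3 := by
      rw [Real.norm_eq_abs, abs_of_nonneg (by positivity)]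
      exact mul_le_mul_of_nonneg_right (le_max_left C 1) (by positivity)
    exact le_trans h1 h3
  have hnpos : 0 < n := hκ0
  rcases le_or_gt |t| n with hcase | hcase
  · -- |t| ≤ ‖κ‖ : genuine estimate
    rw [max_eq_right hcase] at hbound
    have hsmall : n ≤ (|A|/(2*C'))^2 :=
      le_of_lt (lt_of_lt_of_le hκδ (le_trans (min_le_right _ _) (min_le_right _ _)))
    have h2' : 4*C'^2*n ≤ |A|^2 := by
      rw [div_pow] at hsmall
      have h4 : n * (2*C')^2 ≤ |A|^2 := (le_div_iff₀ (by positivity)).mp hsmall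
      calc 4*C'^2*n = n * (2*C')^2 := by ring
        _ ≤ |A|^2 := h4
    have hsq : (|A| * t^2)^2 ≤ (C'*n^3)^2 := by
      have h0 : (0:ℝ) ≤ |A| * t^2 := by positivity
      exact pow_le_pow_left₀ h0 hbound 2
    have h4 : t^4 ≤ n^5 := by
      have s1 : |A|^2*t^4 ≤ C'^2*n^6 := by
        calc |A|^2*t^4 = (|A| * t^2)^2 := by ring
          _ ≤ (C'*n^3)^2 := hsq
          _ = C'^2*n^6 := by ring
      have s2 : C'^2*n^6 ≤ (|A|^2/4)*n^5 := by
        have s2a : C'^2*n ≤ |A|^2/4 := by linarith only [h2']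
        calc C'^2*n^6 = (C'^2*n)*n^5 := by ring
          _ ≤ (|A|^2/4)*n^5 := mul_le_mul_of_nonneg_right s2a (pow_nonneg hnpos.le 5)
      have s3 : |A|^2 * t^4 ≤ |A|^2 * n^5 := by
        have s3a : (|A|^2/4)*n^5 ≤ |A|^2*n^5 := by
          apply mul_le_mul_of_nonneg_right _ (pow_nonneg hnpos.le 5)
          linarith only [sq_nonneg |A|]
        linarith only [s1, s2, s3a]
      exact le_of_mul_le_mul_left s3 (by positivity)
    have h5 : |t| ^ (4:ℕ) ≤ n ^ (5:ℕ) := by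
      calc |t| ^ (4:ℕ) = t^4 := by
            rw [← abs_pow]
            exact abs_of_nonneg (by positivity)
        _ ≤ n^5 := h4
    have h6 : ((|t| ^ (4:ℕ) : ℝ)) ^ ((1:ℝ)/4) ≤ ((n ^ (5:ℕ) : ℝ)) ^ ((1:ℝ)/4) :=
      Real.rpow_le_rpow (by positivity) h5 (by norm_num)
    have h7 : ((|t| ^ (4:ℕ) : ℝ)) ^ ((1:ℝ)/4) = |t| := by
      rw [← Real.rpow_natCast |t| 4, ← Real.rpow_mul (abs_nonneg t)]
      norm_num
    have h8 : ((n ^ (5:ℕ) : ℝ)) ^ ((1:ℝ)/4) = n ^ ((1:ℝ) + 1/4) := by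
      rw [← Real.rpow_natCast n 5, ← Real.rpow_mul hnpos.le]
      norm_num
    rw [h7, h8] at h6
    exact h6
  · -- |t| > ‖κ‖ : impossible for small δ
    exfalso
    rw [max_eq_left hcase.le] at hbound
    have ht0 : 0 < |t| := lt_trans hnpos hcase
    have h1 : |A| * |t|^2 ≤ (C' * |t|) * |t|^2 := by
      calc |A| * |t|^2 = |A| * t^2 := by rw [sq_abs]
        _ ≤ C' * |t|^3 := hbound
        _ = (C' * |t|) * |t|^2 := by ring
    have h2 : |A| ≤ C' * |t| := le_of_mul_le_mul_right h1 (by positivity)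
    have h3 : |t| < |A|/(2*C') :=
      lt_of_lt_of_le hlδ (le_trans (min_le_right _ _) (min_le_left _ _))
    have h4 : C' * |t| < C' * (|A|/(2*C')) := by
      exact mul_lt_mul_of_pos_left h3 hC'0
    rw [mul_div_assoc'] at h4
    have h5 : C' * |A| / (2*C') = |A|/2 := by
      field_simp
    rw [h5] at h4
    linarith only [h2, h4, hApos]
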